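/- arXiv:2305.06623 — 3 statements merged into one kernel-verified Lean document; each statement's English description precedes it below -/
import Mathlib

section
/- The Carlitz q-Euler numbers ε_n, defined by ε_n = (1-q)^{-n} Σ_{k=0}^n (-1)^k C(n,k) (1+q)/(1+q^{k+1}), satisfy ε_0 = 1 and, for all n ≥ 1, the recursion Σ_{k=0}^n C(n,k) q^{k+1} ε_k + ε_n = 0. -/
open Finset

noncomputable def q : RatFunc ℚ := RatFunc.X

/-- Carlitz's q-Euler numbers, via the explicit formula. -/
noncomputable def qEuler (n : ℕ) : RatFunc ℚ :=
  ((1 - q) ^ n)⁻¹ *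
    ∑ k ∈ Finset.range (n + 1),
      (-1) ^ k * (n.choose k : RatFunc ℚ) * ((1 + q) / (1 + q ^ (k + 1)))

lemma one_sub_q_ne : (1 - q : RatFunc ℚ) ≠ 0 := by
  have : (1 - q : RatFunc ℚ) = algebraMap (Polynomial ℚ) _ (1 - Polynomial.X) := by
    simp [q, RatFunc.algebraMap_X]
  rw [this]
  apply RatFunc.algebraMap_ne_zero
  intro h
  have := congrArg (fun p => Polynomial.coeff p 1) h
  simp [Polynomial.coeff_one] at this

lemma one_add_qpow_ne (j : ℕ) : (1 + q ^ (j+1) : RatFunc ℚ) ≠ 0 := by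
  have : (1 + q ^ (j+1) : RatFunc ℚ) = algebraMap (Polynomial ℚ) _ (1 + Polynomial.X ^ (j+1)) := by
    simp [q, RatFunc.algebraMap_X]
  rw [this]
  apply RatFunc.algebraMap_ne_zero
  intro h
  have := congrArg (fun p => Polynomial.coeff p 0) h
  simp [Polynomial.coeff_X_pow] at this

lemma qE_inner_sum (n j : ℕ) (hj : j ≤ n) :
    ∑ k ∈ range (n+1), ((n.choose k : RatFunc ℚ) * (k.choose j : RatFunc ℚ)) * (q^(k+1) * (1-q)^(n-k))
      = (n.choose j : RatFunc ℚ) * q^(j+1) := by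
  rw [range_eq_Ico, ← Finset.sum_Ico_consecutive _ (Nat.zero_le j) (by omega : j ≤ n+1)]
  have h0 : (∑ k ∈ Finset.Ico 0 j, ((n.choose k : RatFunc ℚ) * (k.choose j : RatFunc ℚ)) * (q^(k+1) * (1-q)^(n-k))) = 0 := by
    apply Finset.sum_eq_zero
    intro k hk
    simp [Nat.choose_eq_zero_of_lt (Finset.mem_Ico.mp hk).2]
  rw [h0, zero_add, Finset.sum_Ico_eq_sum_range]
  have hnj : n + 1 - j = (n - j) + 1 := by omega
  rw [hnj]
  have hcong : ∀ m ∈ range ((n-j)+1),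
      ((n.choose (j+m) : RatFunc ℚ) * ((j+m).choose j)) * (q^((j+m)+1) * (1-q)^(n-(j+m)))
      = (n.choose j : RatFunc ℚ) * q^(j+1) * (q^m * (1-q)^((n-j)-m) * ((n-j).choose m)) := by
    intro m hm
    have hm' : m ≤ n - j := Nat.lt_succ_iff.mp (Finset.mem_range.mp hm)
    have hid : n.choose (j+m) * (j+m).choose j = n.choose j * (n-j).choose m := by
      have := Nat.choose_mul (n := n) (Nat.le_add_right j m)
      simpa using this
    have hid' : (n.choose (j+m) : RatFunc ℚ) * ((j+m).choose j) = (n.choose j : RatFunc ℚ) * ((n-j).choose m) := by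
      exact_mod_cast congrArg (Nat.cast : ℕ → RatFunc ℚ) hid
    have hp1 : q^((j+m)+1) = q^(j+1) * q^m := by rw [← pow_add]; ring_nf
    have hp2 : (n : ℕ) - (j+m) = (n-j) - m := by omega
    rw [hid', hp1, hp2]; ring
  rw [Finset.sum_congr rfl hcong, ← Finset.mul_sum]
  have : (∑ m ∈ range ((n-j)+1), q^m * (1-q)^((n-j)-m) * ((n-j).choose m : RatFunc ℚ)) = (q + (1-q))^(n-j) := by
    rw [add_pow]
  rw [this]
  simp

theorem qEuler_rec :
    qEuler 0 = 1 ∧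
      ∀ n : ℕ, 1 ≤ n →
        (∑ k ∈ Finset.range (n + 1),
            (n.choose k : RatFunc ℚ) * q ^ (k + 1) * qEuler k) + qEuler n = 0 := by
  constructor
  · rw [qEuler]
    have h1 : (1 + q : RatFunc ℚ) ≠ 0 := by simpa using one_add_qpow_ne 0
    simp [div_self h1]
  · intro n hn
    set f : ℕ → RatFunc ℚ := fun j => (1 + q) / (1 + q ^ (j + 1)) with hf
    have hA : ∀ k, (1 - q)^k * qEuler k = ∑ j ∈ range (k+1), (-1)^j * (k.choose j : RatFunc ℚ) * f j := by
      intro k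
      rw [qEuler, ← mul_assoc, mul_inv_cancel₀ (pow_ne_zero _ one_sub_q_ne), one_mul]
    suffices key : (1 - q)^n * ((∑ k ∈ range (n+1), (n.choose k : RatFunc ℚ) * q^(k+1) * qEuler k) + qEuler n) = 0 by
      rcases mul_eq_zero.mp key with h | h
      · exact absurd h (pow_ne_zero _ one_sub_q_ne)
      · exact h
    rw [mul_add, Finset.mul_sum]
    have step1 : ∀ k ∈ range (n+1),
        (1-q)^n * ((n.choose k : RatFunc ℚ) * q^(k+1) * qEuler k)
        = ∑ j ∈ range (n+1), ((n.choose k : RatFunc ℚ) * (k.choose j)) * (q^(k+1) * (1-q)^(n-k)) * ((-1)^j * f j) := by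
      intro k hk
      have hkn : k ≤ n := Nat.lt_succ_iff.mp (mem_range.mp hk)
      have hpow : (1-q : RatFunc ℚ)^n = (1-q)^(n-k) * (1-q)^k := by
        rw [← pow_add]; congr 1; omega
      calc (1-q)^n * ((n.choose k : RatFunc ℚ) * q^(k+1) * qEuler k)
          = ((n.choose k : RatFunc ℚ) * q^(k+1) * (1-q)^(n-k)) * ((1-q)^k * qEuler k) := by
            rw [hpow]; ring
        _ = ((n.choose k : RatFunc ℚ) * q^(k+1) * (1-q)^(n-k)) * ∑ j ∈ range (k+1), (-1)^j * (k.choose j : RatFunc ℚ) * f j := by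
            rw [hA k]
        _ = ∑ j ∈ range (k+1), ((n.choose k : RatFunc ℚ) * (k.choose j)) * (q^(k+1) * (1-q)^(n-k)) * ((-1)^j * f j) := by
            rw [Finset.mul_sum]; exact Finset.sum_congr rfl (fun j _ => by ring)
        _ = ∑ j ∈ range (n+1), ((n.choose k : RatFunc ℚ) * (k.choose j)) * (q^(k+1) * (1-q)^(n-k)) * ((-1)^j * f j) := by
            apply Finset.sum_subset
            · intro x hx
              simp only [mem_range] at hx ⊢
              omega
            · intro j hj hkj
              have : k < j := by
                simp only [mem_range] at hj hkj
                omega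
              simp [Nat.choose_eq_zero_of_lt this]
    rw [Finset.sum_congr rfl step1, Finset.sum_comm, hA n]
    have step2 : ∀ j ∈ range (n+1),
        (∑ k ∈ range (n+1), ((n.choose k : RatFunc ℚ) * (k.choose j)) * (q^(k+1) * (1-q)^(n-k)) * ((-1)^j * f j))
        = ((n.choose j : RatFunc ℚ) * q^(j+1)) * ((-1)^j * f j) := by
      intro j hj
      have hjn : j ≤ n := Nat.lt_succ_iff.mp (mem_range.mp hj)
      rw [← Finset.sum_mul, qE_inner_sum n j hjn]
    rw [Finset.sum_congr rfl step2, ← Finset.sum_add_distrib]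
    have step3 : ∀ j ∈ range (n+1),
        ((n.choose j : RatFunc ℚ) * q^(j+1)) * ((-1)^j * f j) + (-1)^j * (n.choose j : RatFunc ℚ) * f j
        = ((-1)^j * (n.choose j : RatFunc ℚ)) * (1 + q) := by
      intro j hj
      have hfj : f j * (1 + q^(j+1)) = 1 + q := div_mul_cancel₀ _ (one_add_qpow_ne j)
      calc ((n.choose j : RatFunc ℚ) * q^(j+1)) * ((-1)^j * f j) + (-1)^j * (n.choose j : RatFunc ℚ) * f j
          = ((-1)^j * (n.choose j : RatFunc ℚ)) * (f j * (1 + q^(j+1))) := by ring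
        _ = ((-1)^j * (n.choose j : RatFunc ℚ)) * (1 + q) := by rw [hfj]
    rw [Finset.sum_congr rfl step3, ← Finset.sum_mul]
    have halt : (∑ j ∈ range (n+1), (-1 : RatFunc ℚ)^j * (n.choose j)) = 0 := by
      have h := add_pow (-1 : RatFunc ℚ) 1 n
      simp only [one_pow, mul_one, neg_add_cancel] at h
      rw [zero_pow (by omega : n ≠ 0)] at h
      exact h.symm
    rw [halt, zero_mul]
end

section
/- As q → 1, the Carlitz q-Euler number ε_n tends to E_n(0), the value of the n-th Euler polynomial at 0, where the Euler polynomials are defined by the generating function 2e^{xt}/(e^t+1) = Σ_{n≥0} E_n(x) t^n/n!. -/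
open Finset Filter Topology

/-- Carlitz's q-Euler numbers, as a function of a real parameter `q`. -/
noncomputable def qEulerReal (q : ℝ) (n : ℕ) : ℝ :=
  ((1 - q) ^ n)⁻¹ *
    ∑ k ∈ Finset.range (n + 1),
      (-1) ^ k * (n.choose k : ℝ) * ((1 + q) / (1 + q ^ (k + 1)))

lemma qEuler_key (n : ℕ) (q : ℝ) (hq1 : q ≠ 1) (hq0 : 0 < q) :
    q * ∑ k ∈ Finset.range (n + 1), (n.choose k : ℝ) * q ^ k * qEulerReal q k
      + qEulerReal q n = if n = 0 then 1 + q else 0 := by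
  have h1 : (1 : ℝ) - q ≠ 0 := sub_ne_zero.mpr (Ne.symm hq1)
  have hden : ∀ j : ℕ, (1 : ℝ) + q ^ (j + 1) ≠ 0 := fun j => by positivity
  set G : ℕ → ℕ → ℝ := fun k j =>
    (n.choose k : ℝ) * (k.choose j : ℝ) * q ^ (k + 1) * ((1 - q) ^ k)⁻¹ *
      ((-1) ^ j * (1 + q) / (1 + q ^ (j + 1))) with hG
  have step1 : q * ∑ k ∈ Finset.range (n + 1), (n.choose k : ℝ) * q ^ k * qEulerReal q k
      = ∑ j ∈ Finset.range (n + 1),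
          (-1) ^ j * (n.choose j : ℝ) * ((1 + q) * q ^ (j + 1) / (1 + q ^ (j + 1)))
          * ((1 - q) ^ n)⁻¹ := by
    calc q * ∑ k ∈ Finset.range (n + 1), (n.choose k : ℝ) * q ^ k * qEulerReal q k
        = ∑ k ∈ Finset.range (n + 1), ∑ j ∈ Finset.range (k + 1), G k j := by
          rw [Finset.mul_sum]
          refine Finset.sum_congr rfl fun k hk => ?_
          unfold qEulerReal
          rw [mul_comm (((1 - q) ^ k)⁻¹), Finset.sum_mul, Finset.mul_sum, Finset.mul_sum]
          refine Finset.sum_congr rfl fun j hj => ?_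
          rw [hG]; ring
      _ = ∑ k ∈ Finset.range (n + 1), ∑ j ∈ Finset.range (n + 1), G k j := by
          refine Finset.sum_congr rfl fun k hk => ?_
          refine Finset.sum_subset (Finset.range_subset_range.mpr ?_) fun j _ hj => ?_
          · have := Finset.mem_range.mp hk; omega
          · have : k < j := by simpa using hj
            simp [hG, Nat.choose_eq_zero_of_lt this]
      _ = ∑ j ∈ Finset.range (n + 1), ∑ k ∈ Finset.range (n + 1), G k j := Finset.sum_comm
      _ = ∑ j ∈ Finset.range (n + 1), ∑ k ∈ Finset.Ico j (n + 1), G k j := by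
          refine Finset.sum_congr rfl fun j hj => ?_
          refine (Finset.sum_subset (fun k hk => ?_) fun k hk hk' => ?_).symm
          · rw [Finset.mem_Ico] at hk; exact Finset.mem_range.mpr hk.2
          · have : k < j := by
              rw [Finset.mem_range] at hk; rw [Finset.mem_Ico] at hk'; omega
            simp [hG, Nat.choose_eq_zero_of_lt this]
      _ = ∑ j ∈ Finset.range (n + 1), ∑ m ∈ Finset.range (n + 1 - j), G (j + m) j := by
          refine Finset.sum_congr rfl fun j hj => ?_
          rw [Finset.sum_Ico_eq_sum_range]
      _ = ∑ j ∈ Finset.range (n + 1),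
            (-1) ^ j * (n.choose j : ℝ) * ((1 + q) * q ^ (j + 1) / (1 + q ^ (j + 1)))
            * ((1 - q) ^ n)⁻¹ := by
          refine Finset.sum_congr rfl fun j hj => ?_
          have hjn : j ≤ n := by have := Finset.mem_range.mp hj; omega
          have e1 : ∑ m ∈ Finset.range (n + 1 - j), G (j + m) j
              = ((n.choose j : ℝ) * ((-1) ^ j * (1 + q) / (1 + q ^ (j + 1)))
                  * (q ^ (j + 1) * ((1 - q) ^ j)⁻¹))
                * ∑ m ∈ Finset.range (n - j + 1), ((n - j).choose m : ℝ) * (q * (1 - q)⁻¹) ^ m := by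
            have hrange : n + 1 - j = n - j + 1 := by omega
            rw [hrange, Finset.mul_sum]
            refine Finset.sum_congr rfl fun m hm => ?_
            have hmle : m ≤ n - j := by have := Finset.mem_range.mp hm; omega
            have hchoose : (n.choose (j + m) : ℝ) * ((j + m).choose j : ℝ)
                = (n.choose j : ℝ) * ((n - j).choose m : ℝ) := by
              rw [← Nat.cast_mul, ← Nat.cast_mul,
                Nat.choose_mul (by omega : j ≤ j + m),
                Nat.add_sub_cancel_left]
            rw [hG]
            simp only
            rw [hchoose, show j + m + 1 = (j + 1) + m by omega, pow_add (1 - q) j m,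
              mul_inv, pow_add q (j + 1) m, mul_pow q ((1 - q)⁻¹) m, inv_pow]
            ring
          rw [e1]
          have e2 : ∑ m ∈ Finset.range (n - j + 1), ((n - j).choose m : ℝ) * (q * (1 - q)⁻¹) ^ m
              = ((1 - q) ^ (n - j))⁻¹ := by
            have hbin := add_pow (q * (1 - q)⁻¹) 1 (n - j)
            simp only [one_pow, mul_one] at hbin
            have hx : q * (1 - q)⁻¹ + 1 = (1 - q)⁻¹ := by field_simp; ring
            rw [← Finset.sum_congr rfl fun m _ =>
                (mul_comm ((q * (1 - q)⁻¹) ^ m) (((n - j).choose m : ℝ))),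
              ← hbin, hx, ← inv_pow]
          rw [e2]
          have e3 : ((1 - q) ^ j)⁻¹ * ((1 - q) ^ (n - j))⁻¹ = ((1 - q) ^ n)⁻¹ := by
            rw [← mul_inv, ← pow_add]
            congr 2
            omega
          rw [← e3]
          ring
  rw [step1]
  unfold qEulerReal
  rw [mul_comm (((1 - q) ^ n)⁻¹), ← Finset.sum_mul, ← add_mul, ← Finset.sum_add_distrib]
  have e4 : ∀ j ∈ Finset.range (n + 1),
      (-1) ^ j * (n.choose j : ℝ) * ((1 + q) * q ^ (j + 1) / (1 + q ^ (j + 1)))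
        + (-1) ^ j * (n.choose j : ℝ) * ((1 + q) / (1 + q ^ (j + 1)))
      = (-1) ^ j * (n.choose j : ℝ) * (1 + q) := by
    intro j _
    rw [← mul_add]
    congr 1
    rw [← add_div, div_eq_iff (hden j)]
    ring
  rw [Finset.sum_congr rfl e4, ← Finset.sum_mul]
  have e5 : ∑ j ∈ Finset.range (n + 1), (-1 : ℝ) ^ j * (n.choose j : ℝ)
      = if n = 0 then 1 else 0 := by
    have h0 := Int.alternating_sum_range_choose (n := n)
    have h2 := congrArg (fun z : ℤ => (z : ℝ)) h0
    push_cast at h2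
    simpa using h2
  rw [e5]
  split_ifs with hn
  · subst hn; norm_num
  · simp

/-- As `q → 1`, the Carlitz q-Euler number `ε_n` tends to `E_n(0)`, where the Euler
polynomials have exponential generating function `2 e^{xt}/(e^t + 1)`; at `x = 0` this
means `(∑_{n≥0} E_n(0) t^n/n!) (e^t + 1) = 2`. -/
theorem qEuler_tendsto_eulerPoly_at_zero (E : ℕ → ℝ)
    (hE : (PowerSeries.mk fun n => E n / n.factorial) * (PowerSeries.exp ℝ + 1) = 2) :
    ∀ n : ℕ, Tendsto (fun q : ℝ => qEulerReal q n) (𝓝[≠] 1) (𝓝 (E n)) := by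
  have Erec : ∀ n : ℕ, ∑ k ∈ Finset.range (n + 1), (n.choose k : ℝ) * E k + E n
      = if n = 0 then 2 else 0 := by
    intro n
    have h := congrArg (PowerSeries.coeff n) hE
    have c2 : (2 : PowerSeries ℝ) = PowerSeries.C (R := ℝ) 2 := (map_ofNat _ 2).symm
    rw [mul_add, map_add, mul_one, PowerSeries.coeff_mul, c2, PowerSeries.coeff_C] at h
    simp only [PowerSeries.coeff_mk, PowerSeries.coeff_exp] at h
    rw [Finset.Nat.sum_antidiagonal_eq_sum_range_succ
      (fun i j => E i / i.factorial * (algebraMap ℚ ℝ (1 / j.factorial)))] at h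
    have base : ∑ k ∈ Finset.range (n + 1), E k / k.factorial * (1 / (n - k).factorial)
        + E n / n.factorial = if n = 0 then 2 else 0 := by simpa using h
    have hfn : (n.factorial : ℝ) ≠ 0 := Nat.cast_ne_zero.mpr n.factorial_ne_zero
    calc ∑ k ∈ Finset.range (n + 1), (n.choose k : ℝ) * E k + E n
        = (n.factorial : ℝ) * (∑ k ∈ Finset.range (n + 1),
            E k / k.factorial * (1 / (n - k).factorial) + E n / n.factorial) := by
          rw [mul_add, Finset.mul_sum, mul_div_cancel₀ _ hfn]
          congr 1
          refine Finset.sum_congr rfl fun k hk => ?_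
          have hkn : k ≤ n := by have := Finset.mem_range.mp hk; omega
          have hfk : (k.factorial : ℝ) ≠ 0 := Nat.cast_ne_zero.mpr k.factorial_ne_zero
          have hfnk : ((n - k).factorial : ℝ) ≠ 0 := Nat.cast_ne_zero.mpr (n - k).factorial_ne_zero
          rw [Nat.cast_choose ℝ hkn]
          field_simp
      _ = if n = 0 then 2 else 0 := by
          rw [base]
          split_ifs with hn
          · subst hn; norm_num
          · rw [mul_zero]
  intro n
  induction n using Nat.strong_induction_on with
  | _ n ih =>
  have hev : ∀ᶠ q in 𝓝[≠] (1 : ℝ), qEulerReal q n =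
      ((if n = 0 then 1 + q else 0)
        - q * ∑ k ∈ Finset.range n, (n.choose k : ℝ) * q ^ k * qEulerReal q k)
      / (1 + q ^ (n + 1)) := by
    filter_upwards [nhdsWithin_le_nhds (Ioo_mem_nhds (by norm_num : (0:ℝ) < 1) one_lt_two),
      self_mem_nhdsWithin] with q hq hq1
    have hq1' : q ≠ 1 := by simpa using hq1
    have hkey := qEuler_key n q hq1' hq.1
    rw [Finset.sum_range_succ, Nat.choose_self] at hkey
    have hdpos : (0 : ℝ) < 1 + q ^ (n + 1) := by
      have := pow_pos hq.1 (n + 1); linarith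
    rw [eq_div_iff hdpos.ne', pow_succ]
    push_cast at hkey
    linear_combination hkey
  rw [tendsto_congr' hev]
  have h1 : Tendsto (fun q : ℝ => q) (𝓝[≠] (1:ℝ)) (𝓝 1) := tendsto_id.mono_left nhdsWithin_le_nhds
  have hif : Tendsto (fun q : ℝ => if n = 0 then 1 + q else 0) (𝓝[≠] (1:ℝ))
      (𝓝 (if n = 0 then 2 else 0)) := by
    split_ifs
    · have h2 : (2:ℝ) = 1 + 1 := by norm_num
      rw [h2]; exact tendsto_const_nhds.add h1
    · exact tendsto_const_nhds
  have hsum : Tendsto (fun q : ℝ => ∑ k ∈ Finset.range n,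
      (n.choose k : ℝ) * q ^ k * qEulerReal q k) (𝓝[≠] (1:ℝ))
      (𝓝 (∑ k ∈ Finset.range n, (n.choose k : ℝ) * E k)) := by
    have : ∀ k ∈ Finset.range n, Tendsto (fun q : ℝ => (n.choose k : ℝ) * q ^ k * qEulerReal q k)
        (𝓝[≠] (1:ℝ)) (𝓝 ((n.choose k : ℝ) * E k)) := by
      intro k hk
      have := ((tendsto_const_nhds (x := (n.choose k : ℝ)) (f := 𝓝[≠] (1:ℝ))).mul
        (h1.pow k)).mul (ih k (Finset.mem_range.mp hk))
      simpa using this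
    simpa using tendsto_finset_sum _ this
  have hnum : Tendsto (fun q : ℝ => (if n = 0 then 1 + q else 0)
      - q * ∑ k ∈ Finset.range n, (n.choose k : ℝ) * q ^ k * qEulerReal q k)
      (𝓝[≠] (1:ℝ))
      (𝓝 ((if n = 0 then 2 else 0) - 1 * ∑ k ∈ Finset.range n, (n.choose k : ℝ) * E k)) :=
    hif.sub (h1.mul hsum)
  have hden : Tendsto (fun q : ℝ => 1 + q ^ (n + 1)) (𝓝[≠] (1:ℝ)) (𝓝 2) := by
    have h2 : (2:ℝ) = 1 + 1 ^ (n + 1) := by norm_num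
    rw [h2]; exact tendsto_const_nhds.add (h1.pow (n + 1))
  have hlim := hnum.div hden two_ne_zero
  convert hlim using 1
  · rfl
  congr 1
  have := Erec n
  rw [Finset.sum_range_succ, Nat.choose_self] at this
  push_cast at this
  field_simp
  linarith [this]
end

section
/- Let Φ be the linear functional on ℚ(q)[z] with Φ([n,z choose n]_q) = 1/(-q^2;q)_n. Then Φ(z^n) = ε_n for all n ≥ 0, where ε_n are the Carlitz q-Euler numbers defined by ε_0 = 1 and Σ_{k=0}^n C(n,k) q^{k+1} ε_k + ε_n = 0 for n ≥ 1. -/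
set_option synthInstance.maxHeartbeats 1000000
set_option maxHeartbeats 1000000

open Finset Polynomial

/-- q-integer `[k]_q = (1-q^k)/(1-q)` for `k : ℤ`. -/
noncomputable def qint (k : ℤ) : RatFunc ℚ := (1 - q ^ k) / (1 - q)

/-- q-factorial `[n]_q!`. -/
noncomputable def qfact (n : ℕ) : RatFunc ℚ := ∏ m ∈ Finset.range n, qint (m + 1)

/-- q-Pochhammer `(A;Q)_n`. -/
noncomputable def qPoch (Q A : RatFunc ℚ) (n : ℕ) : RatFunc ℚ :=
  ∏ j ∈ Finset.range n, (1 - A * Q ^ j)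

/-- The generalized q-binomial polynomial `[m, z choose n]_q`. -/
noncomputable def qbinomPoly (m n : ℕ) : Polynomial (RatFunc ℚ) :=
  Polynomial.C (qfact n)⁻¹ *
    ∏ k ∈ Finset.Icc ((m : ℤ) - n + 1) (m : ℤ),
      (Polynomial.C (qint k) + Polynomial.C (q ^ k) * Polynomial.X)

lemma amap_inj : Function.Injective (algebraMap (Polynomial ℚ) (RatFunc ℚ)) :=
  RatFunc.algebraMap_injective ℚ

lemma q_def : q = algebraMap (Polynomial ℚ) (RatFunc ℚ) Polynomial.X := (RatFunc.algebraMap_X).symm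

lemma q_ne_zero : q ≠ 0 := RatFunc.X_ne_zero

lemma one_sub_q_pow_ne_zero {j : ℕ} (hj : 1 ≤ j) : 1 - q ^ j ≠ 0 := by
  rw [q_def, ← map_pow, ← map_one (algebraMap (Polynomial ℚ) (RatFunc ℚ)), ← map_sub]
  intro h
  have := amap_inj (h.trans (map_zero _).symm)
  have h0 := congrArg (fun p => Polynomial.coeff p 0) this
  simp [Polynomial.coeff_X_pow] at h0
  rw [if_neg (by omega)] at h0; norm_num at h0

lemma one_add_q_pow_ne_zero {j : ℕ} (hj : 1 ≤ j) : 1 + q ^ j ≠ 0 := by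
  rw [q_def, ← map_pow, ← map_one (algebraMap (Polynomial ℚ) (RatFunc ℚ)), ← map_add]
  intro h
  have := amap_inj (h.trans (map_zero _).symm)
  have h0 := congrArg (fun p => Polynomial.coeff p 0) this
  simp [Polynomial.coeff_X_pow] at h0
  rw [if_neg (by omega)] at h0; norm_num at h0

lemma one_sub_q_ne_zero : 1 - q ≠ 0 := by
  have := one_sub_q_pow_ne_zero (j := 1) le_rfl; simpa using this

lemma qint_nat_ne_zero (m : ℕ) : qint (m + 1) ≠ 0 := by
  unfold qint
  have h1 : q ^ ((m : ℤ) + 1) = q ^ (m + 1 : ℕ) := by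
    rw [← zpow_natCast]; norm_cast
  rw [h1]
  exact div_ne_zero (one_sub_q_pow_ne_zero (by omega)) one_sub_q_ne_zero



lemma qfact_succ (n : ℕ) : qfact (n + 1) = qfact n * qint (n + 1) := by
  unfold qfact; rw [Finset.prod_range_succ]

lemma qfact_ne_zero (n : ℕ) : qfact n ≠ 0 := by
  induction n with
  | zero => simp [qfact]
  | succ n ih => rw [qfact_succ]; exact mul_ne_zero ih (qint_nat_ne_zero n)

noncomputable def qlin (k : ℤ) : Polynomial (RatFunc ℚ) :=
  Polynomial.C (qint k) + Polynomial.C (q ^ k) * Polynomial.X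

lemma bb_eq (n : ℕ) : qbinomPoly n n =
    Polynomial.C (qfact n)⁻¹ * ∏ k ∈ Finset.Icc (1 : ℤ) n, qlin k := by
  unfold qbinomPoly qlin
  norm_num

lemma bb_zero : qbinomPoly 0 0 = 1 := by
  rw [bb_eq]; simp [qfact]

lemma prod_Icc_top (n : ℤ) (h : 0 ≤ n) (f : ℤ → Polynomial (RatFunc ℚ)) :
    ∏ k ∈ Finset.Icc (1:ℤ) (n+1), f k = (∏ k ∈ Finset.Icc (1:ℤ) n, f k) * f (n+1) := by
  rw [show Finset.Icc (1:ℤ) (n+1) = insert (n+1) (Finset.Icc 1 n) by ext x; simp; omega,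
    Finset.prod_insert (by simp)]
  ring

lemma bb_succ (n : ℕ) : qbinomPoly (n+1) (n+1) =
    Polynomial.C (qint (n + 1))⁻¹ * (qbinomPoly n n * qlin (n + 1)) := by
  rw [bb_eq, bb_eq, qfact_succ]
  have h : ((n : ℤ) + 1) = ((n + 1 : ℕ) : ℤ) := by push_cast; ring
  rw [show ((n + 1 : ℕ) : ℤ) = (n : ℤ) + 1 by push_cast; ring,
    prod_Icc_top _ (by omega)]
  rw [mul_inv, map_mul]
  push_cast
  ring

lemma q_zpow_nat (m : ℕ) : q ^ ((m : ℤ) + 1) = q ^ (m + 1 : ℕ) := by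
  rw [← zpow_natCast]; norm_cast

lemma qlin_natDegree (m : ℕ) : (qlin (m + 1)).natDegree = 1 := by
  unfold qlin
  rw [add_comm]
  exact Polynomial.natDegree_linear (by rw [q_zpow_nat]; exact pow_ne_zero _ q_ne_zero)

lemma bb_ne_zero_natDegree (n : ℕ) :
    qbinomPoly n n ≠ 0 ∧ (qbinomPoly n n).natDegree = n := by
  induction n with
  | zero => simp [bb_zero]
  | succ n ih =>
    have hq : qlin ((n : ℤ) + 1) ≠ 0 := by
      intro h
      have := congrArg Polynomial.natDegree h
      rw [qlin_natDegree] at this; simp at this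
    have hc : (Polynomial.C (qint ((n : ℤ) + 1))⁻¹) ≠ 0 := by
      simp [inv_ne_zero (qint_nat_ne_zero n)]
    constructor
    · rw [bb_succ]
      exact mul_ne_zero hc (mul_ne_zero ih.1 hq)
    · rw [bb_succ, Polynomial.natDegree_mul hc (mul_ne_zero ih.1 hq),
        Polynomial.natDegree_mul ih.1 hq, Polynomial.natDegree_C, qlin_natDegree, ih.2]
      omega

lemma mem_span_bb (p : Polynomial (RatFunc ℚ)) :
    p ∈ Submodule.span (RatFunc ℚ) (Set.range fun m => qbinomPoly m m) := by
  set S := Submodule.span (RatFunc ℚ) (Set.range fun m => qbinomPoly m m) with hS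
  have key : ∀ d : ℕ, ∀ p : Polynomial (RatFunc ℚ), p.natDegree ≤ d → p ∈ S := by
    intro d
    induction d with
    | zero =>
      intro p hp
      have : p = p.coeff 0 • qbinomPoly 0 0 := by
        rw [bb_zero, smul_eq_C_mul, mul_one, Polynomial.eq_C_of_natDegree_le_zero hp]
        simp
      rw [this]
      exact S.smul_mem _ (Submodule.subset_span ⟨0, rfl⟩)
    | succ d ih =>
      intro p hp
      by_cases h : p.natDegree ≤ d
      · exact ih p h
      · set b := qbinomPoly (d+1) (d+1) with hb
        have hbd := bb_ne_zero_natDegree (d+1)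
        have hcb : b.coeff (d+1) ≠ 0 := by
          have := Polynomial.leadingCoeff_ne_zero.mpr hbd.1
          rwa [Polynomial.leadingCoeff, hbd.2] at this
        set r := p - (p.coeff (d+1) / b.coeff (d+1)) • b with hr
        have hrd : r.natDegree ≤ d := by
          rw [Polynomial.natDegree_le_iff_coeff_eq_zero]
          intro m hm
          rcases Nat.lt_or_ge (d+1) m with hm2 | hm2
          · rw [hr]
            simp only [Polynomial.coeff_sub, Polynomial.coeff_smul, smul_eq_mul]
            rw [Polynomial.coeff_eq_zero_of_natDegree_lt (show p.natDegree < m from lt_of_le_of_lt hp hm2),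
              Polynomial.coeff_eq_zero_of_natDegree_lt (show b.natDegree < m by rw [hb, hbd.2]; omega)]
            ring
          · have hm3 : m = d + 1 := by omega
            subst hm3
            rw [hr]
            simp only [Polynomial.coeff_sub, Polynomial.coeff_smul, smul_eq_mul]
            field_simp
            ring
        have : p = r + (p.coeff (d+1) / b.coeff (d+1)) • b := by rw [hr]; ring
        rw [this]
        exact S.add_mem (ih r hrd)
          (S.smul_mem _ (Submodule.subset_span ⟨d+1, rfl⟩))
  exact key p.natDegree p le_rfl

lemma q_zpow_ne_zero (k : ℤ) : q ^ k ≠ 0 := zpow_ne_zero _ q_ne_zero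

lemma qint_step (k : ℤ) : qint k + q ^ k = qint (k + 1) := by
  unfold qint
  rw [zpow_add₀ q_ne_zero, zpow_one]
  field_simp [one_sub_q_ne_zero]
  ring

lemma qlin_comp (k : ℤ) :
    (qlin k).comp (Polynomial.C q * Polynomial.X + 1) = qlin (k + 1) := by
  unfold qlin
  rw [Polynomial.add_comp, Polynomial.C_comp, Polynomial.mul_comp, Polynomial.C_comp,
    Polynomial.X_comp]
  rw [show Polynomial.C (qint k) + Polynomial.C (q ^ k) * (Polynomial.C q * Polynomial.X + 1)
      = Polynomial.C (qint k + q ^ k) + Polynomial.C (q ^ k * q) * Polynomial.X by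
    rw [map_add, map_mul]; ring]
  rw [qint_step, show q ^ k * q = q ^ (k+1) by rw [zpow_add₀ q_ne_zero, zpow_one]]

lemma shift_bb (m : ℕ) :
    (qbinomPoly m m).comp (Polynomial.C q * Polynomial.X + 1) * (1 + Polynomial.C q * Polynomial.X)
      = Polynomial.C (qint ((m : ℤ) + 1)) * qbinomPoly (m+1) (m+1) := by
  induction m with
  | zero =>
    rw [bb_zero, Polynomial.one_comp, one_mul, bb_succ, bb_zero]
    have h1 : qint ((0:ℤ) + 1) = 1 := by
      unfold qint; rw [zero_add, zpow_one, div_self one_sub_q_ne_zero]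
    have h2 : qlin ((0:ℤ) + 1) = 1 + Polynomial.C q * Polynomial.X := by
      unfold qlin; rw [h1, zero_add, zpow_one, Polynomial.C_1]
    norm_num at h1 h2
    push_cast
    rw [h1, h2]
    simp
  | succ m ih =>
    have h1 : qint ((m:ℤ) + 1) ≠ 0 := by
      have := qint_nat_ne_zero m; push_cast at this ⊢; exact this
    have h2 : qint (((m:ℕ):ℤ) + 1 + 1) ≠ 0 := by
      have := qint_nat_ne_zero (m+1); push_cast at this ⊢; exact this
    rw [bb_succ m, Polynomial.mul_comp, Polynomial.mul_comp, Polynomial.C_comp]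
    push_cast
    rw [show Polynomial.C (qint ((m:ℤ)+1))⁻¹ * ((qbinomPoly m m).comp _ * (qlin ((m:ℤ)+1)).comp _) * (1 + Polynomial.C q * Polynomial.X)
      = Polynomial.C (qint ((m:ℤ)+1))⁻¹ * ((qbinomPoly m m).comp (Polynomial.C q * Polynomial.X + 1) * (1 + Polynomial.C q * Polynomial.X)) * (qlin ((m:ℤ)+1)).comp (Polynomial.C q * Polynomial.X + 1) by ring]
    rw [ih, qlin_comp]
    rw [bb_succ (m+1)]
    push_cast
    have e1 : Polynomial.C (qint ((m:ℤ)+1))⁻¹ * (Polynomial.C (qint ((m:ℤ)+1)) * qbinomPoly (m+1) (m+1)) = qbinomPoly (m+1) (m+1) := by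
      rw [← mul_assoc, ← Polynomial.C_mul, inv_mul_cancel₀ h1, Polynomial.C_1, one_mul]
    have e2 : Polynomial.C (qint ((m:ℤ)+1+1)) * (Polynomial.C (qint ((m:ℤ)+1+1))⁻¹ * (qbinomPoly (m+1) (m+1) * qlin ((m:ℤ)+1+1))) = qbinomPoly (m+1) (m+1) * qlin ((m:ℤ)+1+1) := by
      rw [← mul_assoc, ← Polynomial.C_mul, mul_inv_cancel₀ h2, Polynomial.C_1, one_mul]
    rw [e1, e2]


lemma X_mul_bb (m : ℕ) : Polynomial.X * qbinomPoly m m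
    = Polynomial.C (q ^ ((m:ℤ)+1))⁻¹ *
      (Polynomial.C (qint ((m:ℤ)+1)) * qbinomPoly (m+1) (m+1)
        - Polynomial.C (qint ((m:ℤ)+1)) * qbinomPoly m m) := by
  have h1 : qint ((m:ℤ)+1) ≠ 0 := by
    have := qint_nat_ne_zero m; push_cast at this ⊢; exact this
  have hC : Polynomial.C (qint ((m:ℤ)+1)) * qbinomPoly (m+1) (m+1)
      = qbinomPoly m m * qlin ((m:ℤ)+1) := by
    rw [bb_succ m]
    push_cast
    rw [← mul_assoc, ← Polynomial.C_mul, mul_inv_cancel₀ h1, Polynomial.C_1, one_mul]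
  rw [hC]
  unfold qlin
  rw [show qbinomPoly m m * (Polynomial.C (qint ((m:ℤ)+1)) + Polynomial.C (q^((m:ℤ)+1)) * Polynomial.X)
      - Polynomial.C (qint ((m:ℤ)+1)) * qbinomPoly m m
      = Polynomial.C (q^((m:ℤ)+1)) * (Polynomial.X * qbinomPoly m m) by ring]
  rw [← mul_assoc, ← Polynomial.C_mul, inv_mul_cancel₀ (q_zpow_ne_zero _), Polynomial.C_1, one_mul]

lemma one_add_q_pow_ne_zero' {j : ℕ} (hj : 1 ≤ j) : 1 + q ^ j ≠ 0 :=
  one_add_q_pow_ne_zero hj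

lemma qPoch_succ (n : ℕ) :
    qPoch q (-q^2) (n+1) = qPoch q (-q^2) n * (1 + q^(n+2)) := by
  unfold qPoch
  rw [Finset.prod_range_succ]
  congr 1
  ring

lemma qPoch_ne_zero (n : ℕ) : qPoch q (-q^2) n ≠ 0 := by
  induction n with
  | zero => simp [qPoch]
  | succ n ih =>
    rw [qPoch_succ]
    exact mul_ne_zero ih (one_add_q_pow_ne_zero' (by omega))


lemma Phi_T_zero (Φ : Polynomial (RatFunc ℚ) →ₗ[RatFunc ℚ] RatFunc ℚ)
    (hΦ : ∀ n : ℕ, Φ (qbinomPoly n n) = (qPoch q (-q ^ 2) n)⁻¹)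
    (p : Polynomial (RatFunc ℚ)) :
    Φ (Polynomial.C q * ((1 + Polynomial.C q * Polynomial.X) *
        p.comp (Polynomial.C q * Polynomial.X + 1)) + Polynomial.X * p) = 0 := by
  induction mem_span_bb p using Submodule.span_induction with
  | mem x hx =>
    obtain ⟨m, rfl⟩ := hx
    have hshift : (1 + Polynomial.C q * Polynomial.X) *
        (qbinomPoly m m).comp (Polynomial.C q * Polynomial.X + 1)
        = Polynomial.C (qint ((m:ℤ)+1)) * qbinomPoly (m+1) (m+1) := by
      rw [mul_comm]; exact shift_bb m
    rw [hshift, X_mul_bb]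
    have hrw : Polynomial.C q * (Polynomial.C (qint ((m:ℤ)+1)) * qbinomPoly (m+1) (m+1)) +
        Polynomial.C (q ^ ((m:ℤ)+1))⁻¹ *
          (Polynomial.C (qint ((m:ℤ)+1)) * qbinomPoly (m+1) (m+1)
            - Polynomial.C (qint ((m:ℤ)+1)) * qbinomPoly m m)
        = (q * qint ((m:ℤ)+1) + (q ^ ((m:ℤ)+1))⁻¹ * qint ((m:ℤ)+1)) • qbinomPoly (m+1) (m+1)
          - ((q ^ ((m:ℤ)+1))⁻¹ * qint ((m:ℤ)+1)) • qbinomPoly m m := by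
      simp only [Polynomial.smul_eq_C_mul, map_add, map_mul, map_inv₀]
      ring
    rw [hrw, map_sub, map_smul, map_smul, hΦ, hΦ, smul_eq_mul, smul_eq_mul]
    rw [qPoch_succ m, q_zpow_nat m]
    have hP := qPoch_ne_zero m
    have hs : (1 : RatFunc ℚ) + q ^ (m + 2) ≠ 0 := one_add_q_pow_ne_zero' (by omega)
    have hq1 : q ^ (m + 1 : ℕ) ≠ (0 : RatFunc ℚ) := pow_ne_zero _ q_ne_zero
    field_simp
    ring
  | zero => simp
  | add x y hx hy ihx ihy =>
    have : Polynomial.C q * ((1 + Polynomial.C q * Polynomial.X) *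
        (x + y).comp (Polynomial.C q * Polynomial.X + 1)) + Polynomial.X * (x + y)
        = (Polynomial.C q * ((1 + Polynomial.C q * Polynomial.X) *
            x.comp (Polynomial.C q * Polynomial.X + 1)) + Polynomial.X * x)
          + (Polynomial.C q * ((1 + Polynomial.C q * Polynomial.X) *
            y.comp (Polynomial.C q * Polynomial.X + 1)) + Polynomial.X * y) := by
      rw [Polynomial.add_comp]; ring
    rw [this, map_add, ihx, ihy, add_zero]
  | smul a x hx ihx =>
    have : Polynomial.C q * ((1 + Polynomial.C q * Polynomial.X) *
        (a • x).comp (Polynomial.C q * Polynomial.X + 1)) + Polynomial.X * (a • x)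
        = a • (Polynomial.C q * ((1 + Polynomial.C q * Polynomial.X) *
            x.comp (Polynomial.C q * Polynomial.X + 1)) + Polynomial.X * x) := by
      rw [Polynomial.smul_comp]
      simp only [smul_add, Polynomial.smul_eq_C_mul]
      ring
    rw [this, map_smul, ihx, smul_zero]

lemma Phi_rec (Φ : Polynomial (RatFunc ℚ) →ₗ[RatFunc ℚ] RatFunc ℚ)
    (hΦ : ∀ n : ℕ, Φ (qbinomPoly n n) = (qPoch q (-q ^ 2) n)⁻¹)
    (n : ℕ) (hn : 1 ≤ n) :
    (∑ k ∈ Finset.range (n+1), (n.choose k : RatFunc ℚ) * q^(k+1) * Φ (Polynomial.X^k))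
      + Φ (Polynomial.X^n) = 0 := by
  have h := Phi_T_zero Φ hΦ (Polynomial.X^(n-1))
  rw [Polynomial.X_pow_comp] at h
  have e1 : (1 + Polynomial.C q * Polynomial.X) * (Polynomial.C q * Polynomial.X + 1)^(n-1)
      = (Polynomial.C q * Polynomial.X + 1)^n := by
    rw [add_comm (1 : Polynomial (RatFunc ℚ)) (Polynomial.C q * Polynomial.X), ← pow_succ']
    congr 1; omega
  have e2 : Polynomial.X * Polynomial.X^(n-1) = (Polynomial.X ^ n : Polynomial (RatFunc ℚ)) := by
    rw [← pow_succ']; congr 1; omega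
  rw [e1, e2] at h
  have e3 : Polynomial.C q * (Polynomial.C q * Polynomial.X + 1)^n
      = ∑ k ∈ Finset.range (n+1),
          ((n.choose k : RatFunc ℚ) * q^(k+1)) • (Polynomial.X^k : Polynomial (RatFunc ℚ)) := by
    rw [add_pow, Finset.mul_sum]
    refine Finset.sum_congr rfl fun k hk => ?_
    rw [mul_pow, one_pow, ← Polynomial.C_pow, mul_one, Polynomial.smul_eq_C_mul,
      ← Polynomial.C_eq_natCast, pow_succ, map_mul, map_mul]
    ring
  rw [e3] at h
  rw [map_add, map_sum] at h
  simp only [map_smul, smul_eq_mul] at h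
  exact h

theorem Phi_pow_eq_qEuler (Φ : Polynomial (RatFunc ℚ) →ₗ[RatFunc ℚ] RatFunc ℚ)
    (hΦ : ∀ n : ℕ, Φ (qbinomPoly n n) = (qPoch q (-q ^ 2) n)⁻¹)
    (ε : ℕ → RatFunc ℚ) (hε0 : ε 0 = 1)
    (hεrec : ∀ n : ℕ, 1 ≤ n →
      (∑ k ∈ Finset.range (n + 1), (n.choose k : RatFunc ℚ) * q ^ (k + 1) * ε k) + ε n = 0) :
    ∀ n : ℕ, Φ (Polynomial.X ^ n) = ε n := by
  intro n
  induction n using Nat.strong_induction_on with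
  | _ n ih =>
    rcases Nat.eq_zero_or_pos n with rfl | hn
    · have h0 := hΦ 0
      rw [bb_zero] at h0
      rw [pow_zero, h0, hε0]
      simp [qPoch]
    · have hF := Phi_rec Φ hΦ n hn
      have hE := hεrec n hn
      rw [Finset.sum_range_succ] at hF hE
      have hsum : ∑ k ∈ Finset.range n, (n.choose k : RatFunc ℚ) * q^(k+1) * Φ (Polynomial.X^k)
          = ∑ k ∈ Finset.range n, (n.choose k : RatFunc ℚ) * q^(k+1) * ε k :=
        Finset.sum_congr rfl fun k hk => by rw [ih k (Finset.mem_range.mp hk)]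
      rw [hsum] at hF
      simp only [Nat.choose_self, Nat.cast_one, one_mul] at hF hE
      have hc : (1 : RatFunc ℚ) + q^(n+1) ≠ 0 := one_add_q_pow_ne_zero' (by omega)
      have hz : (1 + q^(n+1)) * (Φ (Polynomial.X^n) - ε n) = 0 := by
        linear_combination hF - hE
      rcases mul_eq_zero.mp hz with h | h
      · exact absurd h hc
      · exact sub_eq_zero.mp h
end
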